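/- Let (S, (A_i)_{i=1}^m, H, P, (R_i)_{i=1}^m) be a tabular episodic Markov game satisfying Condition 1 with target policy π† and worse policy π⁻. Under the d-portion attack: (i) for every agent i and every state s, Ṽ^{π†}_{i,1}(s) = Ṽ^{†,π†_{-i}}_{i,1}(s), i.e., π†_i is a best response of agent i toward π†_{-i} in the post-attack game, so π† is a Nash equilibrium of the post-attack game; and (ii) if every state s ∈ S is reachable (visited with positive probability) at every step h ∈ {1,…,H} when the post-attack game is played under π†, then π† is the unique Nash equilibrium of the post-attack game: any product policy that is a Nash equilibrium agrees with π† at every state and step. -/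

import Mathlib

open Finset

namespace MGAttack

variable {S : Type} [Fintype S] [DecidableEq S]
variable {m : ℕ} {A : Fin m → Type} [∀ i, Fintype (A i)] [∀ i, DecidableEq (A i)]

/-- `VA P f π n h s`: expected sum of `f` over `n` steps starting from step `h` in
state `s`, when joint actions are drawn from the joint pmf `π` and states evolve
according to `P`.  With `f` a mean-reward function this is the value function. -/
noncomputable def VA (P : ℕ → S → (∀ i, A i) → S → ℝ) (f : ℕ → S → (∀ i, A i) → ℝ)
    (π : ℕ → S → (∀ i, A i) → ℝ) : ℕ → ℕ → S → ℝ
  | 0, _, _ => 0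
  | n + 1, h, s => ∑ a, π h s a * (f h s a + ∑ s', P h s a s' * VA P f π n (h + 1) s')

/-- Value function `V^π_h(s)` for horizon `H` (steps `h, h+1, …, H`). -/
noncomputable def Vf (P : ℕ → S → (∀ i, A i) → S → ℝ) (R : ℕ → S → (∀ i, A i) → ℝ)
    (π : ℕ → S → (∀ i, A i) → ℝ) (H h : ℕ) (s : S) : ℝ :=
  VA P R π (H + 1 - h) h s

/-- Q-function `Q^π_h(s,a)` for horizon `H`. -/
noncomputable def Qf (P : ℕ → S → (∀ i, A i) → S → ℝ) (R : ℕ → S → (∀ i, A i) → ℝ)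
    (π : ℕ → S → (∀ i, A i) → ℝ) (H h : ℕ) (s : S) (a : ∀ i, A i) : ℝ :=
  R h s a + ∑ s', P h s a s' * VA P R π (H - h) (h + 1) s'

/-- Joint pmf of a Markov product policy. -/
noncomputable def jp (π : ∀ i : Fin m, ℕ → S → A i → ℝ) : ℕ → S → (∀ i, A i) → ℝ :=
  fun h s a => ∏ i, π i h s (a i)

/-- Joint action prescribed by a deterministic (product) policy. -/
def tgtJ (τ : ∀ i : Fin m, ℕ → S → A i) (h : ℕ) (s : S) : ∀ i, A i := fun i => τ i h s

/-- A deterministic policy viewed as a (point-mass) stochastic policy. -/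
noncomputable def detP (τ : ∀ i : Fin m, ℕ → S → A i) : ∀ i : Fin m, ℕ → S → A i → ℝ :=
  fun i h s b => if b = τ i h s then 1 else 0

/-- `P` is a transition kernel for the steps `1, …, H`. -/
def IsKernel (H : ℕ) (P : ℕ → S → (∀ i, A i) → S → ℝ) : Prop :=
  ∀ h ∈ Finset.Icc 1 H, ∀ s a, (∀ s', 0 ≤ P h s a s') ∧ ∑ s', P h s a s' = 1

/-- `π` is a Markov product policy for the steps `1, …, H`. -/
def IsPolicy (H : ℕ) (π : ∀ i : Fin m, ℕ → S → A i → ℝ) : Prop :=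
  ∀ i : Fin m, ∀ h ∈ Finset.Icc 1 H, ∀ s, (∀ b, 0 ≤ π i h s b) ∧ ∑ b, π i h s b = 1

/-- `πi` is a Markov policy for the single agent `i`. -/
def IsPolicyI (H : ℕ) {i : Fin m} (πi : ℕ → S → A i → ℝ) : Prop :=
  ∀ h ∈ Finset.Icc 1 H, ∀ s, (∀ b, 0 ≤ πi h s b) ∧ ∑ b, πi h s b = 1

/-- The mean rewards all lie in `[0,1]`. -/
def IsReward (H : ℕ) (R : Fin m → ℕ → S → (∀ i, A i) → ℝ) : Prop :=
  ∀ i, ∀ h ∈ Finset.Icc 1 H, ∀ s a, R i h s a ∈ Set.Icc (0 : ℝ) 1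

/-- `d_h(s,a) = m/2 + (1/2) ∑_i 1(a_i = π†_{i,h}(s))` of the `d`-portion attack. -/
noncomputable def dfun (τ : ∀ i : Fin m, ℕ → S → A i) (h : ℕ) (s : S) (a : ∀ i, A i) : ℝ :=
  (m : ℝ) / 2 + (∑ i, if a i = τ i h s then (1 : ℝ) else 0) / 2

/-- Post-attack mean rewards of the `d`-portion attack (target `τ`, worse policy `τ'`). -/
noncomputable def Rport (R : Fin m → ℕ → S → (∀ i, A i) → ℝ) (τ τ' : ∀ i : Fin m, ℕ → S → A i)
    (i : Fin m) : ℕ → S → (∀ i, A i) → ℝ :=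
  fun h s a => (dfun τ h s a / m) * R i h s (tgtJ τ h s)
    + (1 - dfun τ h s a / m) * R i h s (tgtJ τ' h s)

/-- Post-attack transition probabilities of the `d`-portion attack. -/
noncomputable def Pport (P : ℕ → S → (∀ i, A i) → S → ℝ) (τ τ' : ∀ i : Fin m, ℕ → S → A i) :
    ℕ → S → (∀ i, A i) → S → ℝ :=
  fun h s a s' => (dfun τ h s a / m) * P h s (tgtJ τ h s) s'
    + (1 - dfun τ h s a / m) * P h s (tgtJ τ' h s) s'

/-- `Δ^{†−}_{i,h}(s) = Q^{π†}_{i,h}(s, π†_h(s)) − Q^{π†}_{i,h}(s, π⁻_h(s))` (original game). -/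
noncomputable def Δdag (P : ℕ → S → (∀ i, A i) → S → ℝ) (R : Fin m → ℕ → S → (∀ i, A i) → ℝ)
    (τ τ' : ∀ i : Fin m, ℕ → S → A i) (H : ℕ) (i : Fin m) (h : ℕ) (s : S) : ℝ :=
  Qf P (R i) (jp (detP τ)) H h s (tgtJ τ h s) - Qf P (R i) (jp (detP τ)) H h s (tgtJ τ' h s)

/-- Post-attack mean rewards of the `η`-gap attack; `ΔR i` is the reward spread of agent `i`. -/
noncomputable def Rgap (R : Fin m → ℕ → S → (∀ i, A i) → ℝ) (τ : ∀ i : Fin m, ℕ → S → A i)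
    (η : ℝ) (ΔR : Fin m → ℝ) (H : ℕ) (i : Fin m) : ℕ → S → (∀ i, A i) → ℝ :=
  fun h s a =>
    if a = tgtJ τ h s then R i h s a
    else R i h s (tgtJ τ h s) - (η + ((H - h : ℕ) : ℝ) * ΔR i) * (if a i = τ i h s then 0 else 1)

/-- Post-attack mean rewards of the mixed attack. -/
noncomputable def Rmix (R : Fin m → ℕ → S → (∀ i, A i) → ℝ) (τ : ∀ i : Fin m, ℕ → S → A i)
    (i : Fin m) : ℕ → S → (∀ i, A i) → ℝ :=
  fun h s a => (if a i = τ i h s then (1 : ℝ) else 0) * R i h s (tgtJ τ h s)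

/-- Post-attack transition probabilities of the mixed attack. -/
def Pmix (P : ℕ → S → (∀ i, A i) → S → ℝ) (τ : ∀ i : Fin m, ℕ → S → A i) :
    ℕ → S → (∀ i, A i) → S → ℝ :=
  fun h s a s' => P h s (tgtJ τ h s) s'

/-- Probability of being in state `s'` after `n` steps, starting from `(h, s)` and following
the deterministic policy `τ` under the transitions `P`. -/
noncomputable def reach (P : ℕ → S → (∀ i, A i) → S → ℝ) (τ : ∀ i : Fin m, ℕ → S → A i) :
    ℕ → ℕ → S → S → ℝ
  | 0, _, s, s' => if s' = s then 1 else 0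
  | n + 1, h, s, s' => ∑ t, P h s (tgtJ τ h s) t * reach P τ n (h + 1) t s'

/-- Expected sum of a state-dependent function along the Markov chain `Ps`. -/
noncomputable def SSum (Ps : ℕ → S → S → ℝ) (f : ℕ → S → ℝ) : ℕ → ℕ → S → ℝ
  | 0, _, _ => 0
  | n + 1, h, s => f h s + ∑ s', Ps h s s' * SSum Ps f n (h + 1) s'

end MGAttack

namespace MGAttack

set_option linter.unusedSectionVars false

variable {S : Type} [Fintype S] [DecidableEq S]
variable {m : ℕ} {A : Fin m → Type} [∀ i, Fintype (A i)] [∀ i, DecidableEq (A i)]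

lemma sum_prod_pi (f : ∀ i : Fin m, A i → ℝ) :
    ∑ a : ∀ i, A i, ∏ i, f i (a i) = ∏ i, ∑ b, f i b := by
  conv_rhs => rw [Finset.prod_univ_sum]
  simp

lemma jp_mul_marginal (ρ : ∀ i : Fin m, ℕ → S → A i → ℝ) (h : ℕ) (s : S) (k : Fin m)
    (G : A k → ℝ) (hsum : ∀ j, ∑ b, ρ j h s b = 1) :
    ∑ a : ∀ j, A j, jp ρ h s a * G (a k) = ∑ b, ρ k h s b * G b := by
  classical
  set F : ∀ j : Fin m, A j → ℝ :=
    Function.update (fun j b => ρ j h s b) k (fun b => ρ k h s b * G b) with hF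
  have hpt : ∀ a : ∀ j, A j, jp ρ h s a * G (a k) = ∏ j, F j (a j) := by
    intro a
    rw [jp, ← Finset.mul_prod_erase Finset.univ _ (Finset.mem_univ k),
        ← Finset.mul_prod_erase Finset.univ (fun j => F j (a j)) (Finset.mem_univ k)]
    have e1 : F k (a k) = ρ k h s (a k) * G (a k) := by simp [hF]
    have e2 : ∀ j ∈ Finset.univ.erase k, F j (a j) = ρ j h s (a j) := by
      intro j hj
      simp [hF, Function.update_of_ne (Finset.ne_of_mem_erase hj)]
    rw [e1, Finset.prod_congr rfl e2]
    ring
  calc ∑ a : ∀ j, A j, jp ρ h s a * G (a k)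
      = ∑ a : ∀ j, A j, ∏ j, F j (a j) := Finset.sum_congr rfl (fun a _ => hpt a)
    _ = ∏ j, ∑ b, F j b := sum_prod_pi F
    _ = ∑ b, ρ k h s b * G b := by
        rw [← Finset.mul_prod_erase Finset.univ _ (Finset.mem_univ k)]
        have e1 : (∑ b, F k b) = ∑ b, ρ k h s b * G b := by simp [hF]
        have e2 : ∀ j ∈ Finset.univ.erase k, (∑ b, F j b) = 1 := by
          intro j hj
          have : F j = fun b => ρ j h s b := by
            simp [hF, Function.update_of_ne (Finset.ne_of_mem_erase hj)]
          rw [this]; exact hsum j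
        rw [e1, Finset.prod_eq_one e2, mul_one]

lemma jp_sum_one (ρ : ∀ i : Fin m, ℕ → S → A i → ℝ) (h : ℕ) (s : S)
    (hsum : ∀ j, ∑ b, ρ j h s b = 1) : ∑ a : ∀ j, A j, jp ρ h s a = 1 := by
  have := sum_prod_pi (fun j b => ρ j h s b)
  simpa [jp, hsum] using this

lemma jp_nonneg (ρ : ∀ i : Fin m, ℕ → S → A i → ℝ) (h : ℕ) (s : S) (a : ∀ j, A j)
    (hnn : ∀ j b, 0 ≤ ρ j h s b) : 0 ≤ jp ρ h s a :=
  Finset.prod_nonneg fun j _ => hnn j (a j)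

lemma jp_detP (τ : ∀ i : Fin m, ℕ → S → A i) (h : ℕ) (s : S) (a : ∀ i, A i) :
    jp (detP τ) h s a = if a = tgtJ τ h s then 1 else 0 := by
  rcases eq_or_ne a (tgtJ τ h s) with rfl | ha
  · simp [jp, detP, tgtJ]
  · have : ∃ i, a i ≠ τ i h s := by
      by_contra hc
      push_neg at hc
      exact ha (funext fun i => hc i)
    obtain ⟨i, hi⟩ := this
    rw [if_neg ha]
    exact Finset.prod_eq_zero (Finset.mem_univ i) (by simp [detP, hi])

lemma VA_det_succ (P' : ℕ → S → (∀ i, A i) → S → ℝ) (f : ℕ → S → (∀ i, A i) → ℝ)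
    (τ : ∀ i : Fin m, ℕ → S → A i) (n h : ℕ) (s : S) :
    VA P' f (jp (detP τ)) (n+1) h s
      = f h s (tgtJ τ h s)
        + ∑ s', P' h s (tgtJ τ h s) s' * VA P' f (jp (detP τ)) n (h+1) s' := by
  rw [VA]
  rw [Finset.sum_congr rfl (fun a _ => by rw [jp_detP])]
  simp [ite_mul]

end MGAttack

namespace MGAttack

set_option linter.unusedSectionVars false
set_option maxHeartbeats 1000000

variable {S : Type} [Fintype S] [DecidableEq S]
variable {m : ℕ} {A : Fin m → Type} [∀ i, Fintype (A i)] [∀ i, DecidableEq (A i)]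

lemma dfun_tgt (τ : ∀ i : Fin m, ℕ → S → A i) (h : ℕ) (s : S) :
    dfun τ h s (tgtJ τ h s) = m := by
  simp [dfun, tgtJ]

lemma dfun_nonneg (τ : ∀ i : Fin m, ℕ → S → A i) (h : ℕ) (s : S) (a : ∀ i, A i) :
    0 ≤ dfun τ h s a := by
  have : (0:ℝ) ≤ ∑ i, if a i = τ i h s then (1:ℝ) else 0 :=
    Finset.sum_nonneg fun i _ => by positivity
  have hm : (0:ℝ) ≤ m := Nat.cast_nonneg m
  unfold dfun; linarith

lemma dfun_ge_half (τ : ∀ i : Fin m, ℕ → S → A i) (h : ℕ) (s : S) (a : ∀ i, A i) :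
    (m:ℝ)/2 ≤ dfun τ h s a := by
  have : (0:ℝ) ≤ ∑ i, if a i = τ i h s then (1:ℝ) else 0 :=
    Finset.sum_nonneg fun i _ => by positivity
  unfold dfun; linarith

lemma dfun_le (τ : ∀ i : Fin m, ℕ → S → A i) (h : ℕ) (s : S) (a : ∀ i, A i) :
    dfun τ h s a ≤ m := by
  have h1 : (∑ i, if a i = τ i h s then (1:ℝ) else 0) ≤ ∑ _i : Fin m, (1:ℝ) :=
    Finset.sum_le_sum fun i _ => by split <;> norm_num
  simp only [Finset.sum_const, Finset.card_univ, Fintype.card_fin, nsmul_eq_mul, mul_one] at h1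
  unfold dfun; linarith

lemma Rport_tgt (R : Fin m → ℕ → S → (∀ i, A i) → ℝ) (τ τ' : ∀ i : Fin m, ℕ → S → A i)
    (i : Fin m) (h : ℕ) (s : S) (hm : (m:ℝ) ≠ 0) :
    Rport R τ τ' i h s (tgtJ τ h s) = R i h s (tgtJ τ h s) := by
  rw [Rport, dfun_tgt, div_self hm]
  ring

lemma Pport_tgt (P : ℕ → S → (∀ i, A i) → S → ℝ) (τ τ' : ∀ i : Fin m, ℕ → S → A i)
    (h : ℕ) (s : S) (s' : S) (hm : (m:ℝ) ≠ 0) :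
    Pport P τ τ' h s (tgtJ τ h s) s' = P h s (tgtJ τ h s) s' := by
  rw [Pport, dfun_tgt, div_self hm]
  ring

lemma VA_port_tgt (P : ℕ → S → (∀ i, A i) → S → ℝ) (R : Fin m → ℕ → S → (∀ i, A i) → ℝ)
    (τ τ' : ∀ i : Fin m, ℕ → S → A i) (i : Fin m) (hm : (m:ℝ) ≠ 0) :
    ∀ n h s, VA (Pport P τ τ') (Rport R τ τ' i) (jp (detP τ)) n h s
      = VA P (R i) (jp (detP τ)) n h s := by
  intro n
  induction n with
  | zero => intro h s; rfl
  | succ n ih =>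
    intro h s
    rw [VA_det_succ, VA_det_succ, Rport_tgt _ _ _ _ _ _ hm]
    congr 1
    refine Finset.sum_congr rfl fun s' _ => ?_
    rw [Pport_tgt _ _ _ _ _ _ hm, ih]

lemma VA_congr (P' : ℕ → S → (∀ i, A i) → S → ℝ) (f : ℕ → S → (∀ i, A i) → ℝ)
    (q q' : ℕ → S → (∀ i, A i) → ℝ) :
    ∀ n h, (∀ h', h ≤ h' → h' < h + n → ∀ s a, q h' s a = q' h' s a) →
      ∀ s, VA P' f q n h s = VA P' f q' n h s := by
  intro n
  induction n with
  | zero => intro h _ s; rfl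
  | succ n ih =>
    intro h hq s
    rw [VA, VA]
    refine Finset.sum_congr rfl fun a _ => ?_
    rw [hq h le_rfl (by omega) s a]
    congr 2
    refine Finset.sum_congr rfl fun s' _ => ?_
    rw [ih (h+1) (fun h' h1 h2 s a => hq h' (by omega) (by omega) s a) s']

lemma mu_eq (τ : ∀ i : Fin m, ℕ → S → A i) (ρ : ∀ i : Fin m, ℕ → S → A i → ℝ)
    (h : ℕ) (s : S) (hsum : ∀ j, ∑ b, ρ j h s b = 1) :
    ∑ a : ∀ j, A j, jp ρ h s a * dfun τ h s a
      = (m:ℝ)/2 + (∑ k, ρ k h s (τ k h s))/2 := by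
  have h2 : ∑ a : ∀ j, A j, jp ρ h s a * (∑ k, if a k = τ k h s then (1:ℝ) else 0)
      = ∑ k, ρ k h s (τ k h s) := by
    simp_rw [Finset.mul_sum]
    rw [Finset.sum_comm]
    refine Finset.sum_congr rfl fun k _ => ?_
    rw [jp_mul_marginal ρ h s k (fun b => if b = τ k h s then (1:ℝ) else 0) hsum]
    simp
  have h1 : ∑ a : ∀ j, A j, jp ρ h s a = 1 := jp_sum_one ρ h s hsum
  calc ∑ a : ∀ j, A j, jp ρ h s a * dfun τ h s a
      = ∑ a : ∀ j, A j, (jp ρ h s a * ((m:ℝ)/2)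
          + (jp ρ h s a * (∑ k, if a k = τ k h s then (1:ℝ) else 0))/2) := by
        refine Finset.sum_congr rfl fun a _ => ?_
        rw [dfun]; ring
    _ = (∑ a : ∀ j, A j, jp ρ h s a) * ((m:ℝ)/2)
          + (∑ a : ∀ j, A j, jp ρ h s a * (∑ k, if a k = τ k h s then (1:ℝ) else 0))/2 := by
        rw [Finset.sum_add_distrib, Finset.sum_mul, Finset.sum_div]
    _ = (m:ℝ)/2 + (∑ k, ρ k h s (τ k h s))/2 := by rw [h1, h2]; ring

end MGAttack

namespace MGAttack

set_option linter.unusedSectionVars false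
set_option maxHeartbeats 1000000

variable {S : Type} [Fintype S] [DecidableEq S]
variable {m : ℕ} {A : Fin m → Type} [∀ i, Fintype (A i)] [∀ i, DecidableEq (A i)]

lemma VA_step (P : ℕ → S → (∀ i, A i) → S → ℝ) (R : Fin m → ℕ → S → (∀ i, A i) → ℝ)
    (τ τ' : ∀ i : Fin m, ℕ → S → A i) (i : Fin m) (hm : 0 < m)
    (ρ : ∀ j : Fin m, ℕ → S → A j → ℝ) (h : ℕ) (s : S)
    (hsum : ∀ j, ∑ b, ρ j h s b = 1) (W : S → ℝ) :
    ∑ a : ∀ j, A j, jp ρ h s a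
        * (Rport R τ τ' i h s a + ∑ s', Pport P τ τ' h s a s' * W s')
      = (1/2 + (∑ k, ρ k h s (τ k h s)) / (2*m))
          * (R i h s (tgtJ τ h s) + ∑ s', P h s (tgtJ τ h s) s' * W s')
        + (1 - (1/2 + (∑ k, ρ k h s (τ k h s)) / (2*m)))
          * (R i h s (tgtJ τ' h s) + ∑ s', P h s (tgtJ τ' h s) s' * W s') := by
  have hmR : (m:ℝ) ≠ 0 := by positivity
  have hpt : ∀ a : ∀ j, A j,
      Rport R τ τ' i h s a + ∑ s', Pport P τ τ' h s a s' * W s'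
        = (R i h s (tgtJ τ' h s) + ∑ s', P h s (tgtJ τ' h s) s' * W s')
          + dfun τ h s a
            * (((R i h s (tgtJ τ h s) + ∑ s', P h s (tgtJ τ h s) s' * W s')
              - (R i h s (tgtJ τ' h s) + ∑ s', P h s (tgtJ τ' h s) s' * W s')) / m) := by
    intro a
    simp only [Rport, Pport, add_mul, Finset.sum_add_distrib, mul_assoc, ← Finset.mul_sum,
      Finset.sum_div]
    field_simp
    ring
  rw [Finset.sum_congr rfl (fun a _ => by rw [hpt a])]
  simp only [mul_add, Finset.sum_add_distrib, ← Finset.sum_mul, ← mul_assoc]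
  rw [jp_sum_one ρ h s hsum, Finset.sum_congr rfl
    (fun a (_ : a ∈ Finset.univ) => mul_comm (jp ρ h s a) (dfun τ h s a))]
  rw [Finset.sum_congr rfl
    (fun a (_ : a ∈ Finset.univ) => mul_comm (dfun τ h s a) (jp ρ h s a)), mu_eq τ ρ h s hsum]
  field_simp
  ring

lemma sum_tgt_le (ρ : ∀ i : Fin m, ℕ → S → A i → ℝ) (τ : ∀ i : Fin m, ℕ → S → A i)
    (h : ℕ) (s : S) (hsum : ∀ j, ∑ b, ρ j h s b = 1) (hnn : ∀ j b, 0 ≤ ρ j h s b) :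
    (∑ k, ρ k h s (τ k h s)) ≤ m := by
  have : ∀ k : Fin m, ρ k h s (τ k h s) ≤ 1 := by
    intro k
    rw [← hsum k]
    exact Finset.single_le_sum (fun b _ => hnn k b) (Finset.mem_univ _)
  calc (∑ k, ρ k h s (τ k h s)) ≤ ∑ _k : Fin m, (1:ℝ) := Finset.sum_le_sum fun k _ => this k
    _ = m := by simp

lemma Pport_nonneg (P : ℕ → S → (∀ i, A i) → S → ℝ) (τ τ' : ∀ i : Fin m, ℕ → S → A i)
    (h : ℕ) (s : S) (a : ∀ i, A i) (s' : S) (hm : 0 < m)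
    (h1 : 0 ≤ P h s (tgtJ τ h s) s') (h2 : 0 ≤ P h s (tgtJ τ' h s) s') :
    0 ≤ Pport P τ τ' h s a s' := by
  have hmR : (0:ℝ) < m := by exact_mod_cast hm
  have hd0 : 0 ≤ dfun τ h s a / m := div_nonneg (dfun_nonneg τ h s a) hmR.le
  have hd1 : dfun τ h s a / m ≤ 1 := by
    rw [div_le_one hmR]; exact dfun_le τ h s a
  exact add_nonneg (mul_nonneg hd0 h1) (mul_nonneg (by linarith) h2)

lemma Pport_ge_half (P : ℕ → S → (∀ i, A i) → S → ℝ) (τ τ' : ∀ i : Fin m, ℕ → S → A i)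
    (h : ℕ) (s : S) (a : ∀ i, A i) (s' : S) (hm : 0 < m)
    (h1 : 0 ≤ P h s (tgtJ τ h s) s') (h2 : 0 ≤ P h s (tgtJ τ' h s) s') :
    (1/2) * P h s (tgtJ τ h s) s' ≤ Pport P τ τ' h s a s' := by
  have hmR : (0:ℝ) < m := by exact_mod_cast hm
  have hd0 : 1/2 ≤ dfun τ h s a / m := by
    rw [le_div_iff₀ hmR]
    have := dfun_ge_half τ h s a
    linarith
  have hd1 : dfun τ h s a / m ≤ 1 := by
    rw [div_le_one hmR]; exact dfun_le τ h s a
  have : (1/2) * P h s (tgtJ τ h s) s' ≤ (dfun τ h s a / m) * P h s (tgtJ τ h s) s' :=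
    mul_le_mul_of_nonneg_right hd0 h1
  have h3 : 0 ≤ (1 - dfun τ h s a / m) * P h s (tgtJ τ' h s) s' :=
    mul_nonneg (by linarith) h2
  unfold Pport
  linarith

lemma detP_sum_one (τ : ∀ i : Fin m, ℕ → S → A i) (j : Fin m) (h : ℕ) (s : S) :
    ∑ b, detP τ j h s b = 1 := by
  simp [detP]

lemma reach_nonneg (P' : ℕ → S → (∀ i, A i) → S → ℝ) (τ : ∀ i : Fin m, ℕ → S → A i) :
    ∀ n h s s', (∀ h' s'' t, h ≤ h' → h' < h + n → 0 ≤ P' h' s'' (tgtJ τ h' s'') t) →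
      0 ≤ reach P' τ n h s s' := by
  intro n
  induction n with
  | zero => intro h s s' _; rw [reach]; positivity
  | succ n ih =>
    intro h s s' hP
    rw [reach]
    refine Finset.sum_nonneg fun t _ => mul_nonneg (hP h s t le_rfl (by omega)) ?_
    exact ih (h+1) t s' (fun h' s'' t' h1 h2 => hP h' s'' t' (by omega) (by omega))

end MGAttack

namespace MGAttack

set_option linter.unusedSectionVars false
set_option maxHeartbeats 1000000

variable {S : Type} [Fintype S] [DecidableEq S]
variable {m : ℕ} {A : Fin m → Type} [∀ i, Fintype (A i)] [∀ i, DecidableEq (A i)]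

lemma detP_nonneg (τ : ∀ i : Fin m, ℕ → S → A i) (j : Fin m) (h : ℕ) (s : S) (b : A j) :
    0 ≤ detP τ j h s b := by
  dsimp [detP]; split <;> norm_num

lemma partI (H : ℕ) (hm : 1 ≤ m)
    (P : ℕ → S → (∀ i, A i) → S → ℝ) (hP : IsKernel H P)
    (R : Fin m → ℕ → S → (∀ i, A i) → ℝ)
    (τ τ' : ∀ i : Fin m, ℕ → S → A i)
    (hcond : ∀ i : Fin m, ∀ h ∈ Finset.Icc 1 H, ∀ s : S, 0 < Δdag P R τ τ' H i h s)
    (i : Fin m) (πi : ℕ → S → A i → ℝ) (hπi : IsPolicyI H πi) :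
    ∀ n h, 1 ≤ h → h + n = H + 1 → ∀ s,
      VA (Pport P τ τ') (Rport R τ τ' i) (jp (Function.update (detP τ) i πi)) n h s
        ≤ VA (Pport P τ τ') (Rport R τ τ' i) (jp (detP τ)) n h s := by
  have hm0 : 0 < m := hm
  have hmR : (m:ℝ) ≠ 0 := Nat.cast_ne_zero.2 (by omega)
  have hmR0 : (0:ℝ) < m := by exact_mod_cast hm0
  intro n
  induction n with
  | zero => intro h _ _ s; exact le_refl _
  | succ n ih =>
    intro h h1 h2 s
    have hhH : h ≤ H := by omega
    have hmem : h ∈ Finset.Icc 1 H := Finset.mem_Icc.2 ⟨h1, hhH⟩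
    set q := Function.update (detP τ) i πi with hq
    have hqsum : ∀ j, ∑ b, q j h s b = 1 := by
      intro j
      rcases eq_or_ne j i with rfl | hj
      · rw [hq]; simp only [Function.update_self]; exact (hπi h hmem s).2
      · rw [hq]; simp only [Function.update_of_ne hj]; exact detP_sum_one τ j h s
    have hqnn : ∀ j b, 0 ≤ q j h s b := by
      intro j b
      rcases eq_or_ne j i with rfl | hj
      · rw [hq]; simp only [Function.update_self]; exact (hπi h hmem s).1 b
      · rw [hq]; simp only [Function.update_of_ne hj]; exact detP_nonneg τ j h s b
    set W : S → ℝ := VA (Pport P τ τ') (Rport R τ τ' i) (jp (detP τ)) n (h+1) with hW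
    have hWorig : ∀ s', W s' = VA P (R i) (jp (detP τ)) n (h+1) s' := fun s' =>
      VA_port_tgt P R τ τ' i hmR n (h+1) s'
    have hΔ : (R i h s (tgtJ τ h s) + ∑ s', P h s (tgtJ τ h s) s' * W s')
        - (R i h s (tgtJ τ' h s) + ∑ s', P h s (tgtJ τ' h s) s' * W s')
        = Δdag P R τ τ' H i h s := by
      simp only [hWorig]
      rw [Δdag, Qf, Qf, show H - h = n from by omega]
    have hμle : (1/2 + (∑ k, q k h s (τ k h s)) / (2*m)) ≤ 1 := by
      have hle : (∑ k, q k h s (τ k h s)) ≤ m := sum_tgt_le q τ h s hqsum hqnn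
      have h12 : (m:ℝ)/(2*m) = 1/2 := by field_simp
      have : (∑ k, q k h s (τ k h s))/(2*m) ≤ (m:ℝ)/(2*m) := by gcongr
      linarith
    calc VA (Pport P τ τ') (Rport R τ τ' i) (jp q) (n+1) h s
        = ∑ a : ∀ j, A j, jp q h s a * (Rport R τ τ' i h s a
            + ∑ s', Pport P τ τ' h s a s'
              * VA (Pport P τ τ') (Rport R τ τ' i) (jp q) n (h+1) s') := by rw [VA]
      _ ≤ ∑ a : ∀ j, A j, jp q h s a * (Rport R τ τ' i h s a
            + ∑ s', Pport P τ τ' h s a s' * W s') := by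
          refine Finset.sum_le_sum fun a _ => ?_
          refine mul_le_mul_of_nonneg_left ?_ (jp_nonneg q h s a hqnn)
          refine add_le_add_right (Finset.sum_le_sum fun s' _ => ?_) _
          refine mul_le_mul_of_nonneg_left (ih (h+1) (by omega) (by omega) s') ?_
          exact Pport_nonneg P τ τ' h s a s' hm0
            ((hP h hmem s (tgtJ τ h s)).1 s') ((hP h hmem s (tgtJ τ' h s)).1 s')
      _ = (1/2 + (∑ k, q k h s (τ k h s)) / (2*m))
            * (R i h s (tgtJ τ h s) + ∑ s', P h s (tgtJ τ h s) s' * W s')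
          + (1 - (1/2 + (∑ k, q k h s (τ k h s)) / (2*m)))
            * (R i h s (tgtJ τ' h s) + ∑ s', P h s (tgtJ τ' h s) s' * W s') :=
          VA_step P R τ τ' i hm0 q h s hqsum W
      _ ≤ R i h s (tgtJ τ h s) + ∑ s', P h s (tgtJ τ h s) s' * W s' := by
          have hpos : 0 < (R i h s (tgtJ τ h s) + ∑ s', P h s (tgtJ τ h s) s' * W s')
              - (R i h s (tgtJ τ' h s) + ∑ s', P h s (tgtJ τ' h s) s' * W s') := by
            rw [hΔ]; exact hcond i h hmem s
          nlinarith [hpos, hμle]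
      _ = VA (Pport P τ τ') (Rport R τ τ' i) (jp (detP τ)) (n+1) h s := by
          rw [VA_det_succ, Rport_tgt _ _ _ _ _ _ hmR]
          congr 1
          refine Finset.sum_congr rfl fun s' _ => ?_
          rw [Pport_tgt _ _ _ _ _ _ hmR]

end MGAttack

namespace MGAttack

set_option linter.unusedSectionVars false
set_option maxHeartbeats 1000000

variable {S : Type} [Fintype S] [DecidableEq S]
variable {m : ℕ} {A : Fin m → Type} [∀ i, Fintype (A i)] [∀ i, DecidableEq (A i)]

lemma jp_eq_det (π : ∀ i : Fin m, ℕ → S → A i → ℝ) (τ : ∀ i : Fin m, ℕ → S → A i)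
    (h : ℕ) (s : S) (hpmf : ∀ j, (∀ b, 0 ≤ π j h s b) ∧ ∑ b, π j h s b = 1)
    (h1 : ∀ j, π j h s (τ j h s) = 1) : ∀ a, jp π h s a = jp (detP τ) h s a := by
  have hzero : ∀ j b, b ≠ τ j h s → π j h s b = 0 := by
    intro j b hb
    have hsum := (hpmf j).2
    have hsplit := Finset.add_sum_erase Finset.univ (π j h s) (Finset.mem_univ (τ j h s))
    have hrest : ∑ c ∈ Finset.univ.erase (τ j h s), π j h s c = 0 := by
      rw [hsum] at hsplit
      rw [h1 j] at hsplit
      linarith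
    exact (Finset.sum_eq_zero_iff_of_nonneg (fun c _ => (hpmf j).1 c)).1 hrest b
      (Finset.mem_erase.2 ⟨hb, Finset.mem_univ b⟩)
  intro a
  rw [jp_detP]
  rcases eq_or_ne a (tgtJ τ h s) with rfl | ha
  · rw [if_pos rfl, jp]
    exact Finset.prod_eq_one fun j _ => h1 j
  · rw [if_neg ha]
    have : ∃ j, a j ≠ τ j h s := by
      by_contra hc
      push_neg at hc
      exact ha (funext fun j => hc j)
    obtain ⟨j, hj⟩ := this
    exact Finset.prod_eq_zero (Finset.mem_univ j) (hzero j (a j) hj)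

lemma VA_step' (P : ℕ → S → (∀ i, A i) → S → ℝ) (R : Fin m → ℕ → S → (∀ i, A i) → ℝ)
    (τ τ' : ∀ i : Fin m, ℕ → S → A i) (i : Fin m) (hm : 0 < m)
    (ρ : ∀ j : Fin m, ℕ → S → A j → ℝ) (h : ℕ) (s : S)
    (hsum : ∀ j, ∑ b, ρ j h s b = 1) (n : ℕ) (W : S → ℝ)
    (hcont : ∀ s', VA (Pport P τ τ') (Rport R τ τ' i) (jp ρ) n (h+1) s' = W s') :
    VA (Pport P τ τ') (Rport R τ τ' i) (jp ρ) (n+1) h s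
      = (1/2 + (∑ k, ρ k h s (τ k h s)) / (2*m))
          * (R i h s (tgtJ τ h s) + ∑ s', P h s (tgtJ τ h s) s' * W s')
        + (1 - (1/2 + (∑ k, ρ k h s (τ k h s)) / (2*m)))
          * (R i h s (tgtJ τ' h s) + ∑ s', P h s (tgtJ τ' h s) s' * W s') := by
  rw [VA]
  have hpt : ∀ a : ∀ j, A j,
      Rport R τ τ' i h s a + ∑ s', Pport P τ τ' h s a s'
          * VA (Pport P τ τ') (Rport R τ τ' i) (jp ρ) n (h+1) s'
        = Rport R τ τ' i h s a + ∑ s', Pport P τ τ' h s a s' * W s' := by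
    intro a
    congr 1
    exact Finset.sum_congr rfl fun s' _ => by rw [hcont s']
  rw [Finset.sum_congr rfl fun a _ => by rw [hpt a]]
  exact VA_step P R τ τ' i hm ρ h s hsum W

end MGAttack

namespace MGAttack

set_option linter.unusedSectionVars false
set_option maxHeartbeats 2000000

variable {S : Type} [Fintype S] [DecidableEq S]
variable {m : ℕ} {A : Fin m → Type} [∀ i, Fintype (A i)] [∀ i, DecidableEq (A i)]

lemma key2 (H : ℕ) (hm : 1 ≤ m)
    (P : ℕ → S → (∀ i, A i) → S → ℝ) (hP : IsKernel H P)
    (R : Fin m → ℕ → S → (∀ i, A i) → ℝ)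
    (τ τ' : ∀ i : Fin m, ℕ → S → A i)
    (hcond : ∀ i : Fin m, ∀ h ∈ Finset.Icc 1 H, ∀ s : S, 0 < Δdag P R τ τ' H i h s)
    (hreach : ∀ h ∈ Finset.Icc 1 H, ∀ s : S, ∃ s₁ : S, 0 < reach (Pport P τ τ') τ (h - 1) 1 s₁ s)
    (π : ∀ j : Fin m, ℕ → S → A j → ℝ) (hπ : IsPolicy H π)
    (hNE : ∀ i : Fin m, ∀ πi : ℕ → S → A i → ℝ, IsPolicyI H πi → ∀ s : S,
      Vf (Pport P τ τ') (Rport R τ τ' i) (jp (Function.update π i πi)) H 1 s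
        ≤ Vf (Pport P τ τ') (Rport R τ τ' i) (jp π) H 1 s)
    (h : ℕ) (h1 : 1 ≤ h) (hhH : h ≤ H)
    (hfut : ∀ h', h < h' → h' ≤ H → ∀ s a, jp π h' s a = jp (detP τ) h' s a) :
    ∀ i s₀, π i h s₀ (τ i h s₀) = 1 := by
  have hm0 : 0 < m := hm
  have hmR : (m:ℝ) ≠ 0 := Nat.cast_ne_zero.2 (by omega)
  have hmem : h ∈ Finset.Icc 1 H := Finset.mem_Icc.2 ⟨h1, hhH⟩
  intro i s₀
  by_contra hc
  have hcle : ∀ s, π i h s (τ i h s) ≤ 1 := by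
    intro s
    have hp := hπ i h hmem s
    rw [← hp.2]
    exact Finset.single_le_sum (fun b _ => hp.1 b) (Finset.mem_univ _)
  have hclt : π i h s₀ (τ i h s₀) < 1 := lt_of_le_of_ne (hcle s₀) hc
  -- the one-shot deviation
  set πi' : ℕ → S → A i → ℝ := fun h' s b => if h' = h then detP τ i h' s b else π i h' s b
    with hπi'
  have hπi'pol : IsPolicyI H πi' := by
    intro h' hmem' s
    by_cases hh : h' = h
    · subst hh
      rw [hπi']
      simp only [if_pos rfl]
      exact ⟨fun b => detP_nonneg τ i h' s b, detP_sum_one τ i h' s⟩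
    · rw [hπi']
      simp only [if_neg hh]
      exact hπ i h' hmem' s
  set π' := Function.update π i πi' with hπ'def
  have hoff : ∀ h', h' ≠ h → ∀ s a, jp π' h' s a = jp π h' s a := by
    intro h' hh s a
    rw [jp, jp]
    refine Finset.prod_congr rfl fun j _ => ?_
    rcases eq_or_ne j i with rfl | hj
    · rw [hπ'def]
      simp only [Function.update_self, hπi', if_neg hh]
    · rw [hπ'def]
      simp only [Function.update_of_ne hj]
  -- continuation equality at step h+1
  have hcontπ : ∀ s', VA (Pport P τ τ') (Rport R τ τ' i) (jp π) (H - h) (h+1) s'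
      = VA (Pport P τ τ') (Rport R τ τ' i) (jp (detP τ)) (H - h) (h+1) s' :=
    VA_congr _ _ (jp π) (jp (detP τ)) (H - h) (h+1)
      (fun h' hge hlt s a => hfut h' (by omega) (by omega) s a)
  have hcontπ' : ∀ s', VA (Pport P τ τ') (Rport R τ τ' i) (jp π') (H - h) (h+1) s'
      = VA (Pport P τ τ') (Rport R τ τ' i) (jp (detP τ)) (H - h) (h+1) s' := by
    intro s'
    rw [VA_congr _ _ (jp π') (jp π) (H - h) (h+1)
      (fun h' hge hlt s a => hoff h' (by omega) s a) s']
    exact hcontπ s'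
  -- gap formula at step h
  have hgap : ∀ s, VA (Pport P τ τ') (Rport R τ τ' i) (jp π') (H + 1 - h) h s
      - VA (Pport P τ τ') (Rport R τ τ' i) (jp π) (H + 1 - h) h s
      = ((1 - π i h s (τ i h s))/(2*m)) * Δdag P R τ τ' H i h s := by
    intro s
    have hsum : ∀ j, ∑ b, π j h s b = 1 := fun j => (hπ j h hmem s).2
    have hsum' : ∀ j, ∑ b, π' j h s b = 1 := by
      intro j
      rcases eq_or_ne j i with rfl | hj
      · rw [hπ'def]
        simp only [Function.update_self]
        exact (hπi'pol h hmem s).2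
      · rw [hπ'def]
        simp only [Function.update_of_ne hj]
        exact hsum j
    have eπ := VA_step' P R τ τ' i hm0 π h s hsum (H - h)
      (VA (Pport P τ τ') (Rport R τ τ' i) (jp (detP τ)) (H - h) (h+1)) hcontπ
    have eπ' := VA_step' P R τ τ' i hm0 π' h s hsum' (H - h)
      (VA (Pport P τ τ') (Rport R τ τ' i) (jp (detP τ)) (H - h) (h+1)) hcontπ'
    have hsumk : ∑ k, π' k h s (τ k h s)
        = (∑ k, π k h s (τ k h s)) + (1 - π i h s (τ i h s)) := by
      have hk : ∀ k : Fin m, π' k h s (τ k h s)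
          = π k h s (τ k h s) + (if k = i then 1 - π i h s (τ i h s) else 0) := by
        intro k
        rcases eq_or_ne k i with rfl | hk
        · rw [hπ'def]
          simp only [Function.update_self, hπi', if_pos rfl, detP, if_pos rfl]
          norm_num
        · rw [hπ'def]
          simp only [Function.update_of_ne hk, if_neg hk, add_zero]
      rw [Finset.sum_congr rfl fun k _ => hk k, Finset.sum_add_distrib]
      simp
    have hWorig : ∀ s', VA (Pport P τ τ') (Rport R τ τ' i) (jp (detP τ)) (H - h) (h+1) s'
        = VA P (R i) (jp (detP τ)) (H - h) (h+1) s' := fun s' =>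
      VA_port_tgt P R τ τ' i hmR (H - h) (h+1) s'
    have hΔ : (R i h s (tgtJ τ h s) + ∑ s', P h s (tgtJ τ h s) s'
          * VA (Pport P τ τ') (Rport R τ τ' i) (jp (detP τ)) (H - h) (h+1) s')
        - (R i h s (tgtJ τ' h s) + ∑ s', P h s (tgtJ τ' h s) s'
          * VA (Pport P τ τ') (Rport R τ τ' i) (jp (detP τ)) (H - h) (h+1) s')
        = Δdag P R τ τ' H i h s := by
      simp only [hWorig]
      rw [Δdag, Qf, Qf]
    rw [show H + 1 - h = (H - h) + 1 from by omega, eπ, eπ', hsumk, ← hΔ]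
    field_simp
    ring
  have hgap0 : ∀ s, 0 ≤ VA (Pport P τ τ') (Rport R τ τ' i) (jp π') (H + 1 - h) h s
      - VA (Pport P τ τ') (Rport R τ τ' i) (jp π) (H + 1 - h) h s := by
    intro s
    rw [hgap s]
    have hnn : (0:ℝ) ≤ (1 - π i h s (τ i h s))/(2*m) :=
      div_nonneg (by linarith [hcle s]) (by positivity)
    exact mul_nonneg hnn (hcond i h hmem s).le
  set D : ℝ := ((1 - π i h s₀ (τ i h s₀))/(2*m)) * Δdag P R τ τ' H i h s₀ with hD
  have hDpos : 0 < D := by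
    rw [hD]
    exact mul_pos (div_pos (by linarith) (by positivity)) (hcond i h hmem s₀)
  -- propagation to earlier steps
  have prop : ∀ k h'', h'' + k = h → 1 ≤ h'' → ∀ s,
      D * (1/2)^k * reach (Pport P τ τ') τ k h'' s s₀
        ≤ VA (Pport P τ τ') (Rport R τ τ' i) (jp π') (H + 1 - h'') h'' s
          - VA (Pport P τ τ') (Rport R τ τ' i) (jp π) (H + 1 - h'') h'' s := by
    intro k
    induction k with
    | zero =>
      intro h'' he h1' s
      have hhh : h'' = h := by omega
      subst hhh
      rw [reach]
      rcases eq_or_ne s₀ s with rfl | hs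
      · rw [if_pos rfl, hgap s₀]
        simp [hD]
      · rw [if_neg hs, mul_zero]
        exact hgap0 s
    | succ k ihk =>
      intro h'' he h1' s
      have hh2 : h'' ≤ H := by omega
      have hmem'' : h'' ∈ Finset.Icc 1 H := Finset.mem_Icc.2 ⟨h1', hh2⟩
      have hne : h'' ≠ h := by omega
      have hsums : ∀ j, ∑ b, π j h'' s b = 1 := fun j => (hπ j h'' hmem'' s).2
      have hnns : ∀ j b, 0 ≤ π j h'' s b := fun j b => (hπ j h'' hmem'' s).1 b
      have ihk' : ∀ s', D * (1/2)^k * reach (Pport P τ τ') τ k (h''+1) s' s₀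
          ≤ VA (Pport P τ τ') (Rport R τ τ' i) (jp π') (H - h'') (h''+1) s'
            - VA (Pport P τ τ') (Rport R τ τ' i) (jp π) (H - h'') (h''+1) s' := by
        intro s'
        have := ihk (h''+1) (by omega) (by omega) s'
        rwa [show H + 1 - (h''+1) = H - h'' from by omega] at this
      have hPtg : ∀ t, Pport P τ τ' h'' s (tgtJ τ h'' s) t = P h'' s (tgtJ τ h'' s) t :=
        fun t => Pport_tgt P τ τ' h'' s t hmR
      have hreachnn : ∀ s', 0 ≤ reach (Pport P τ τ') τ k (h''+1) s' s₀ := by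
        intro s'
        refine reach_nonneg (Pport P τ τ') τ k (h''+1) s' s₀ fun h' s'' t hge hlt => ?_
        rw [Pport_tgt P τ τ' h' s'' t hmR]
        exact (hP h' (Finset.mem_Icc.2 ⟨by omega, by omega⟩) s'' (tgtJ τ h' s'')).1 t
      have hrnn : ∀ s', 0 ≤ D * (1/2)^k * reach (Pport P τ τ') τ k (h''+1) s' s₀ := by
        intro s'
        have := hreachnn s'
        positivity
      have e0 : D * (1/2)^(k+1) * reach (Pport P τ τ') τ (k+1) h'' s s₀
          = ∑ s', ((1/2) * P h'' s (tgtJ τ h'' s) s')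
              * (D * (1/2)^k * reach (Pport P τ τ') τ k (h''+1) s' s₀) := by
        rw [reach, Finset.mul_sum]
        refine Finset.sum_congr rfl fun t _ => ?_
        rw [hPtg t]
        ring
      calc D * (1/2)^(k+1) * reach (Pport P τ τ') τ (k+1) h'' s s₀
          = ∑ s', ((1/2) * P h'' s (tgtJ τ h'' s) s')
              * (D * (1/2)^k * reach (Pport P τ τ') τ k (h''+1) s' s₀) := e0
        _ = ∑ a : ∀ j, A j, jp π h'' s a * ∑ s', ((1/2) * P h'' s (tgtJ τ h'' s) s')
              * (D * (1/2)^k * reach (Pport P τ τ') τ k (h''+1) s' s₀) := by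
            rw [← Finset.sum_mul, jp_sum_one π h'' s hsums, one_mul]
        _ ≤ ∑ a : ∀ j, A j, jp π h'' s a * ∑ s', Pport P τ τ' h'' s a s'
              * (VA (Pport P τ τ') (Rport R τ τ' i) (jp π') (H - h'') (h''+1) s'
                - VA (Pport P τ τ') (Rport R τ τ' i) (jp π) (H - h'') (h''+1) s') := by
            refine Finset.sum_le_sum fun a _ => ?_
            refine mul_le_mul_of_nonneg_left ?_ (jp_nonneg π h'' s a hnns)
            refine Finset.sum_le_sum fun s' _ => ?_
            have hP1 : 0 ≤ P h'' s (tgtJ τ h'' s) s' :=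
              (hP h'' hmem'' s (tgtJ τ h'' s)).1 s'
            have hP2 : 0 ≤ P h'' s (tgtJ τ' h'' s) s' :=
              (hP h'' hmem'' s (tgtJ τ' h'' s)).1 s'
            calc ((1/2) * P h'' s (tgtJ τ h'' s) s')
                  * (D * (1/2)^k * reach (Pport P τ τ') τ k (h''+1) s' s₀)
                ≤ Pport P τ τ' h'' s a s'
                  * (D * (1/2)^k * reach (Pport P τ τ') τ k (h''+1) s' s₀) :=
                  mul_le_mul_of_nonneg_right
                    (Pport_ge_half P τ τ' h'' s a s' hm0 hP1 hP2) (hrnn s')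
              _ ≤ Pport P τ τ' h'' s a s'
                  * (VA (Pport P τ τ') (Rport R τ τ' i) (jp π') (H - h'') (h''+1) s'
                    - VA (Pport P τ τ') (Rport R τ τ' i) (jp π) (H - h'') (h''+1) s') :=
                  mul_le_mul_of_nonneg_left (ihk' s')
                    (Pport_nonneg P τ τ' h'' s a s' hm0 hP1 hP2)
        _ = VA (Pport P τ τ') (Rport R τ τ' i) (jp π') (H + 1 - h'') h'' s
            - VA (Pport P τ τ') (Rport R τ τ' i) (jp π) (H + 1 - h'') h'' s := by
            rw [show H + 1 - h'' = (H - h'') + 1 from by omega, VA, VA,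
              ← Finset.sum_sub_distrib]
            refine Finset.sum_congr rfl fun a _ => ?_
            rw [hoff h'' hne s a]
            have : ∑ s', Pport P τ τ' h'' s a s'
                * (VA (Pport P τ τ') (Rport R τ τ' i) (jp π') (H - h'') (h''+1) s'
                  - VA (Pport P τ τ') (Rport R τ τ' i) (jp π) (H - h'') (h''+1) s')
              = (∑ s', Pport P τ τ' h'' s a s'
                  * VA (Pport P τ τ') (Rport R τ τ' i) (jp π') (H - h'') (h''+1) s')
                - ∑ s', Pport P τ τ' h'' s a s'
                  * VA (Pport P τ τ') (Rport R τ τ' i) (jp π) (H - h'') (h''+1) s' := by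
              rw [← Finset.sum_sub_distrib]
              exact Finset.sum_congr rfl fun s' _ => by ring
            rw [this]
            ring
  -- conclude: contradiction with the NE property at a state that reaches s₀
  obtain ⟨s₁, hs₁⟩ := hreach h hmem s₀
  have hprop := prop (h-1) 1 (by omega) le_rfl s₁
  have hNE' := hNE i πi' hπi'pol s₁
  rw [Vf, Vf] at hNE'
  have hpos : 0 < D * (1/2)^(h-1) * reach (Pport P τ τ') τ (h-1) 1 s₁ s₀ := by positivity
  linarith

end MGAttack


namespace MGAttack

set_option maxHeartbeats 1000000

/-- Under Condition 1 and the `d`-portion attack: (i) for every agent `i`, `π†_i` is a best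
response toward `π†_{-i}` in the post-attack game (so `π†` is a Nash equilibrium); and
(ii) if every state is reachable at every step under `π†` in the post-attack game, then
any product policy that is a Nash equilibrium of the post-attack game agrees with `π†`
at every state and step. -/
theorem stmt5 {S : Type} [Fintype S] [DecidableEq S]
    {m : ℕ} {A : Fin m → Type} [∀ i, Fintype (A i)] [∀ i, DecidableEq (A i)]
    (H : ℕ) (hH : 1 ≤ H) (hm : 1 ≤ m)
    (P : ℕ → S → (∀ i, A i) → S → ℝ) (hP : IsKernel H P)
    (R : Fin m → ℕ → S → (∀ i, A i) → ℝ) (hR : IsReward H R)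
    (τ τ' : ∀ i : Fin m, ℕ → S → A i)
    -- Condition 1
    (hcond : ∀ i : Fin m, ∀ h ∈ Finset.Icc 1 H, ∀ s : S, 0 < Δdag P R τ τ' H i h s) :
    (∀ i : Fin m, ∀ πi : ℕ → S → A i → ℝ, IsPolicyI H πi → ∀ s : S,
        Vf (Pport P τ τ') (Rport R τ τ' i) (jp (Function.update (detP τ) i πi)) H 1 s
          ≤ Vf (Pport P τ τ') (Rport R τ τ' i) (jp (detP τ)) H 1 s)
    ∧ ((∀ h ∈ Finset.Icc 1 H, ∀ s : S, ∃ s₁ : S, 0 < reach (Pport P τ τ') τ (h - 1) 1 s₁ s) →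
        ∀ π : ∀ j : Fin m, ℕ → S → A j → ℝ, IsPolicy H π →
          (∀ i : Fin m, ∀ πi : ℕ → S → A i → ℝ, IsPolicyI H πi → ∀ s : S,
            Vf (Pport P τ τ') (Rport R τ τ' i) (jp (Function.update π i πi)) H 1 s
              ≤ Vf (Pport P τ τ') (Rport R τ τ' i) (jp π) H 1 s) →
          ∀ i : Fin m, ∀ h ∈ Finset.Icc 1 H, ∀ s : S, π i h s (τ i h s) = 1) := by
  constructor
  · intro i πi hπi s
    rw [Vf, Vf, show H + 1 - 1 = H from by omega]
    exact partI H hm P hP R τ τ' hcond i πi hπi H 1 le_rfl (by omega) s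
  · intro hreach π hπ hNE
    have main : ∀ n h, 1 ≤ h → h ≤ H → H ≤ h + n → ∀ i s, π i h s (τ i h s) = 1 := by
      intro n
      induction n with
      | zero =>
        intro h h1 h2 h3 i s
        have hhH : h = H := by omega
        refine key2 H hm P hP R τ τ' hcond hreach π hπ hNE h h1 (by omega) ?_ i s
        intro h' hlt hle
        exact absurd hlt (by omega)
      | succ n ih =>
        intro h h1 h2 h3 i s
        refine key2 H hm P hP R τ τ' hcond hreach π hπ hNE h h1 h2 ?_ i s
        intro h' hlt hle s' a
        exact jp_eq_det π τ h' s' (fun j => hπ j h' (Finset.mem_Icc.2 ⟨by omega, hle⟩) s')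
          (fun j => ih h' (by omega) hle (by omega) j s') a
    intro i h hmem s
    have hm2 := Finset.mem_Icc.1 hmem
    exact main H h hm2.1 hm2.2 (by omega) i s


end MGAttack
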